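/- Assume all external momenta are null, i.e. k_i·k_i = 0 for every i ∈ {1,…,n}. Then the ℓ²-deformed one-loop scattering equations are the residues of the quadratic form F: for every marked point a ∈ {1,…,n,+,−}, the limit of (σ − σ_a)·F(σ) as σ → σ_a (through values of σ distinct from all marked points) exists and equals E_a. In particular F has only simple poles at the marked points σ₁,…,σₙ, σ₊, σ₋. -/

import Mathlib

open Finset Filter Topology

/-- The ℓ²-deformed coefficients of the one-loop scattering equations:
`c₁ = 2ℓ·k₁ + ℓ·ℓ`, `cₙ = 2ℓ·kₙ − ℓ·ℓ`, and `c_i = 2ℓ·k_i` otherwise. -/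
noncomputable def defCoeff {V : Type*} [AddCommGroup V] [Module ℂ V]
    (B : LinearMap.BilinForm ℂ V) {n : ℕ} (k : Fin n → V) (ℓ : V) (i : Fin n) : ℂ :=
  2 * B ℓ (k i) + (if (i : ℕ) = 0 then B ℓ ℓ else 0)
    - (if (i : ℕ) = n - 1 then B ℓ ℓ else 0)

/-- The ℓ²-deformed one-loop scattering equation attached to the external marked point `σ i`. -/
noncomputable def scatEqExt {V : Type*} [AddCommGroup V] [Module ℂ V]
    (B : LinearMap.BilinForm ℂ V) {n : ℕ} (k : Fin n → V) (ℓ : V)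
    (σ : Fin n → ℂ) (σp σm : ℂ) (i : Fin n) : ℂ :=
  (∑ j ∈ univ.filter (· ≠ i), 2 * B (k i) (k j) / (σ i - σ j))
    + defCoeff B k ℓ i * (σp - σm) / ((σ i - σp) * (σ i - σm))

/-- The ℓ²-deformed one-loop scattering equation attached to the node point `σ₊`. -/
noncomputable def scatEqPlus {V : Type*} [AddCommGroup V] [Module ℂ V]
    (B : LinearMap.BilinForm ℂ V) {n : ℕ} (k : Fin n → V) (ℓ : V)
    (σ : Fin n → ℂ) (σp : ℂ) : ℂ :=
  ∑ j, defCoeff B k ℓ j / (σp - σ j)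

/-- The ℓ²-deformed one-loop scattering equation attached to the node point `σ₋`. -/
noncomputable def scatEqMinus {V : Type*} [AddCommGroup V] [Module ℂ V]
    (B : LinearMap.BilinForm ℂ V) {n : ℕ} (k : Fin n → V) (ℓ : V)
    (σ : Fin n → ℂ) (σm : ℂ) : ℂ :=
  - ∑ j, defCoeff B k ℓ j / (σm - σ j)

section
variable {n : ℕ} (σ : Fin n → ℂ) (σp σm : ℂ)

lemma mem_ne {s : ℂ} (hs : s ∈ (Set.range σ ∪ {σp, σm})ᶜ) :
    (∀ i, s ≠ σ i) ∧ s ≠ σp ∧ s ≠ σm := by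
  simp only [Set.mem_compl_iff, Set.mem_union, Set.mem_range, Set.mem_insert_iff,
    Set.mem_singleton_iff, not_or, not_exists] at hs
  exact ⟨fun i h => hs.1 i h.symm, hs.2.1, hs.2.2⟩

lemma tendA (a x : ℂ) (hax : a ≠ x) :
    Tendsto (fun s : ℂ => (s - x)⁻¹) (𝓝[(Set.range σ ∪ {σp, σm})ᶜ] a) (𝓝 ((a - x)⁻¹)) :=
  (((continuousAt_id.sub continuousAt_const).inv₀ (sub_ne_zero.2 hax))).tendsto.mono_left
    nhdsWithin_le_nhds

lemma tend0 (a : ℂ) :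
    Tendsto (fun s : ℂ => s - a) (𝓝[(Set.range σ ∪ {σp, σm})ᶜ] a) (𝓝 0) := by
  have h : ContinuousAt (fun s : ℂ => s - a) a := continuousAt_id.sub continuousAt_const
  have := h.tendsto.mono_left (nhdsWithin_le_nhds (s := (Set.range σ ∪ {σp, σm})ᶜ))
  simpa using this

lemma tendB (a : ℂ) (ha : a ∈ Set.range σ ∪ {σp, σm}) :
    Tendsto (fun s : ℂ => (s - a) * (s - a)⁻¹) (𝓝[(Set.range σ ∪ {σp, σm})ᶜ] a) (𝓝 1) := by
  apply tendsto_const_nhds.congr'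
  filter_upwards [eventually_mem_nhdsWithin] with s hs
  have hne : s ≠ a := fun h => hs (h ▸ ha)
  exact (mul_inv_cancel₀ (sub_ne_zero.2 hne)).symm

/-- limit of `(s-a)(s-b)⁻¹(s-c)⁻¹` as `s → a` in the punctured set. -/
noncomputable def dlt (a b c : ℂ) : ℂ :=
  if a = b then (a - c)⁻¹ else if a = c then (a - b)⁻¹ else 0

lemma tendT {a : ℂ} (b c : ℂ) (ha : a ∈ Set.range σ ∪ {σp, σm}) (hbc : b ≠ c) :
    Tendsto (fun s : ℂ => (s - a) * (s - b)⁻¹ * (s - c)⁻¹)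
      (𝓝[(Set.range σ ∪ {σp, σm})ᶜ] a)
      (𝓝 (dlt a b c)) := by
  unfold dlt
  by_cases h1 : a = b
  · subst h1
    have hac : a ≠ c := hbc
    simpa [hac] using (tendB σ σp σm a ha).mul (tendA σ σp σm a c hac)
  · by_cases h2 : a = c
    · subst h2
      have hab : a ≠ b := fun h => h1 h
      have h2 := ((tendB σ σp σm a ha).mul (tendA σ σp σm a b hab)).congr
        (fun s => by ring :
          ∀ s : ℂ, (s - a) * (s - a)⁻¹ * (s - b)⁻¹ = (s - a) * (s - b)⁻¹ * (s - a)⁻¹)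
      simpa [h1] using h2
    · have := ((tend0 σ σp σm a).mul (tendA σ σp σm a b h1)).mul (tendA σ σp σm a c h2)
      simpa [h1, h2] using this
end


/-- The `V`-valued rational map `p(σ) = ℓ/(σ−σ₊) − ℓ/(σ−σ₋) + ∑ᵢ kᵢ/(σ−σᵢ)`. -/
noncomputable def pMap {V : Type*} [AddCommGroup V] [Module ℂ V] {n : ℕ}
    (k : Fin n → V) (ℓ : V) (σ : Fin n → ℂ) (σp σm : ℂ) (s : ℂ) : V :=
  (s - σp)⁻¹ • ℓ - (s - σm)⁻¹ • ℓ + ∑ i, (s - σ i)⁻¹ • k i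

/-- `ω_{ab}(σ) = (σ_a − σ_b)/((σ−σ_a)(σ−σ_b))`. -/
noncomputable def omegaAB (a b s : ℂ) : ℂ := (a - b) / ((s - a) * (s - b))

/-- The quadratic form `F(σ) = p(σ)·p(σ) − (ℓ·ℓ) ω₊₋(σ)² + (ℓ·ℓ) ω₊₋(σ) ω_{1n}(σ)`,
where `σ1`, `σn` are the first and last external marked points. -/
noncomputable def quadForm {V : Type*} [AddCommGroup V] [Module ℂ V]
    (B : LinearMap.BilinForm ℂ V) {n : ℕ} (k : Fin n → V) (ℓ : V)
    (σ : Fin n → ℂ) (σp σm σ1 σn : ℂ) (s : ℂ) : ℂ :=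
  B (pMap k ℓ σ σp σm s) (pMap k ℓ σ σp σm s)
    - B ℓ ℓ * omegaAB σp σm s ^ 2 + B ℓ ℓ * omegaAB σp σm s * omegaAB σ1 σn s

lemma Fexpand {V : Type*} [AddCommGroup V] [Module ℂ V]
    (B : LinearMap.BilinForm ℂ V) (hsymm : ∀ u v : V, B u v = B v u)
    {n : ℕ} (k : Fin n → V) (ℓ : V) (σ : Fin n → ℂ) (σp σm σ1 σn : ℂ)
    (hnull : ∀ i, B (k i) (k i) = 0)
    (s : ℂ) (hsp : s ≠ σp) (hsm : s ≠ σm) (hs1 : s ≠ σ1) (hsn : s ≠ σn) :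
    quadForm B k ℓ σ σp σm σ1 σn s =
      (∑ j, 2 * B ℓ (k j) *
        ((s - σp)⁻¹ * (s - σ j)⁻¹ - (s - σm)⁻¹ * (s - σ j)⁻¹))
      + (∑ i, ∑ j ∈ univ.filter (· ≠ i), B (k i) (k j) * ((s - σ i)⁻¹ * (s - σ j)⁻¹))
      + B ℓ ℓ * ((s - σp)⁻¹ * (s - σ1)⁻¹ - (s - σm)⁻¹ * (s - σ1)⁻¹
          - (s - σp)⁻¹ * (s - σn)⁻¹ + (s - σm)⁻¹ * (s - σn)⁻¹) := by
  have hup : s - σp ≠ 0 := sub_ne_zero.2 hsp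
  have hum : s - σm ≠ 0 := sub_ne_zero.2 hsm
  have hu1 : s - σ1 ≠ 0 := sub_ne_zero.2 hs1
  have hun : s - σn ≠ 0 := sub_ne_zero.2 hsn
  set u : ℂ := (s - σp)⁻¹ with hu
  set v : ℂ := (s - σm)⁻¹ with hv
  set w : Fin n → ℂ := fun j => (s - σ j)⁻¹ with hw
  have hω : omegaAB σp σm s = u - v := by
    rw [omegaAB, hu, hv, eq_sub_iff_add_eq]
    field_simp
    ring
  have hω1 : omegaAB σ1 σn s = (s - σ1)⁻¹ - (s - σn)⁻¹ := by
    rw [omegaAB, eq_sub_iff_add_eq]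
    field_simp
    ring
  have hpm : pMap k ℓ σ σp σm s = (u - v) • ℓ + ∑ i, w i • k i := by
    rw [pMap, sub_smul]
  have key : ∀ (x : V), B (x + ∑ i, w i • k i) (x + ∑ i, w i • k i)
      = B x x + ∑ i, w i * B x (k i) + ∑ i, w i * B (k i) x
        + ∑ i, ∑ j, w i * w j * B (k i) (k j) := by
    intro x
    set y : V := ∑ i, w i • k i with hy
    have h1 : B (x + y) (x + y) = B x x + B x y + B y x + B y y := by
      simp only [map_add, LinearMap.add_apply]; ring
    have h2 : B x y = ∑ i, w i * B x (k i) := by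
      simp [hy, map_sum, map_smul, smul_eq_mul]
    have h3 : B y x = ∑ i, w i * B (k i) x := by
      simp [hy, map_sum, LinearMap.sum_apply, map_smul, LinearMap.smul_apply, smul_eq_mul]
    have h4 : B y y = ∑ i, ∑ j, w i * w j * B (k i) (k j) := by
      simp only [hy, map_sum, LinearMap.sum_apply, map_smul, LinearMap.smul_apply,
        smul_eq_mul, Finset.mul_sum]
      exact Finset.sum_congr rfl fun i _ => Finset.sum_congr rfl fun j _ => by
        rw [hsymm (k j) (k i)]; ring
    rw [h1, h2, h3, h4]
  have hdiag : ∀ i : Fin n, (∑ j, w i * w j * B (k i) (k j))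
      = ∑ j ∈ univ.filter (· ≠ i), w i * w j * B (k i) (k j) := by
    intro i
    rw [← Finset.sum_filter_add_sum_filter_not univ (· ≠ i)
      (fun j => w i * w j * B (k i) (k j))]
    have hfi : univ.filter (fun j => ¬ j ≠ i) = {i} := by
      ext j; simp
    rw [hfi, Finset.sum_singleton, hnull, mul_zero, add_zero]
  have hBxx : B ((u - v) • ℓ) ((u - v) • ℓ) = (u - v) * ((u - v) * B ℓ ℓ) := by
    simp [map_smul, smul_eq_mul]
  have hx1 : ∀ i, B ((u - v) • ℓ) (k i) = (u - v) * B ℓ (k i) := by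
    intro i; simp [map_smul, smul_eq_mul]
  have hx2 : ∀ i, B (k i) ((u - v) • ℓ) = (u - v) * B ℓ (k i) := by
    intro i; simp [map_smul, smul_eq_mul, hsymm (k i) ℓ]
  have hdbl : (∑ i, ∑ j, w i * w j * B (k i) (k j))
      = ∑ i, ∑ j ∈ univ.filter (· ≠ i), w i * w j * B (k i) (k j) :=
    Finset.sum_congr rfl fun i _ => hdiag i
  rw [quadForm, hpm, key ((u - v) • ℓ), hdbl, hBxx, hω, hω1]
  simp only [hx1, hx2]
  have e1 : (∑ j, 2 * B ℓ (k j) *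
        ((s - σp)⁻¹ * (s - σ j)⁻¹ - (s - σm)⁻¹ * (s - σ j)⁻¹))
      = 2 * ((u - v) * ∑ j, w j * B ℓ (k j)) := by
    rw [Finset.mul_sum, Finset.mul_sum]
    exact Finset.sum_congr rfl fun j _ => by rw [hu, hv, hw]; ring
  have e2 : (∑ i, ∑ j ∈ univ.filter (· ≠ i), B (k i) (k j) * ((s - σ i)⁻¹ * (s - σ j)⁻¹))
      = ∑ i, ∑ j ∈ univ.filter (· ≠ i), w i * w j * B (k i) (k j) :=
    Finset.sum_congr rfl fun i _ => Finset.sum_congr rfl fun j _ => by rw [hw]; ring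
  rw [e1, e2]
  have e3 : (∑ i, w i * ((u - v) * B ℓ (k i))) = (u - v) * ∑ j, w j * B ℓ (k j) := by
    rw [Finset.mul_sum]
    exact Finset.sum_congr rfl fun i _ => by ring
  rw [e3]
  ring


/-- Master limit lemma: limit of `(s - x) * F(s)` for any marked point `x`. -/
lemma master {V : Type*} [AddCommGroup V] [Module ℂ V]
    (B : LinearMap.BilinForm ℂ V) (hsymm : ∀ u v : V, B u v = B v u)
    {n : ℕ} (k : Fin n → V) (ℓ : V) (σ : Fin n → ℂ) (σp σm : ℂ)
    (hinj : Function.Injective σ)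
    (hp : ∀ i, σ i ≠ σp) (hm : ∀ i, σ i ≠ σm) (hpm : σp ≠ σm)
    (hnull : ∀ i, B (k i) (k i) = 0)
    (i0 i1 : Fin n)
    (x : ℂ) (hx : x ∈ Set.range σ ∪ {σp, σm}) :
    Tendsto (fun s : ℂ => (s - x) * quadForm B k ℓ σ σp σm (σ i0) (σ i1) s)
      (𝓝[(Set.range σ ∪ {σp, σm})ᶜ] x)
      (𝓝 ((∑ j, 2 * B ℓ (k j) * (dlt x σp (σ j) - dlt x σm (σ j)))
        + (∑ i, ∑ j ∈ univ.filter (· ≠ i), B (k i) (k j) * dlt x (σ i) (σ j))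
        + B ℓ ℓ * (dlt x σp (σ i0) - dlt x σm (σ i0)
            - dlt x σp (σ i1) + dlt x σm (σ i1)))) := by
  have hgs : ∀ s ∈ (Set.range σ ∪ {σp, σm})ᶜ,
      (s - x) * quadForm B k ℓ σ σp σm (σ i0) (σ i1) s =
      (∑ j, 2 * B ℓ (k j) *
        ((s - x) * (s - σp)⁻¹ * (s - σ j)⁻¹ - (s - x) * (s - σm)⁻¹ * (s - σ j)⁻¹))
      + (∑ i, ∑ j ∈ univ.filter (· ≠ i),
          B (k i) (k j) * ((s - x) * (s - σ i)⁻¹ * (s - σ j)⁻¹))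
      + B ℓ ℓ * ((s - x) * (s - σp)⁻¹ * (s - σ i0)⁻¹
          - (s - x) * (s - σm)⁻¹ * (s - σ i0)⁻¹
          - (s - x) * (s - σp)⁻¹ * (s - σ i1)⁻¹
          + (s - x) * (s - σm)⁻¹ * (s - σ i1)⁻¹) := by
    intro s hs
    obtain ⟨h1, h2, h3⟩ := mem_ne σ σp σm hs
    rw [Fexpand B hsymm k ℓ σ σp σm (σ i0) (σ i1) hnull s h2 h3 (h1 i0) (h1 i1)]
    rw [mul_add, mul_add, Finset.mul_sum, Finset.mul_sum]
    congr 1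
    · congr 1
      · exact Finset.sum_congr rfl fun j _ => by ring
      · refine Finset.sum_congr rfl fun i _ => ?_
        rw [Finset.mul_sum]
        exact Finset.sum_congr rfl fun j _ => by ring
    · ring
  have hT : Tendsto (fun s : ℂ =>
      (∑ j, 2 * B ℓ (k j) *
        ((s - x) * (s - σp)⁻¹ * (s - σ j)⁻¹ - (s - x) * (s - σm)⁻¹ * (s - σ j)⁻¹))
      + (∑ i, ∑ j ∈ univ.filter (· ≠ i),
          B (k i) (k j) * ((s - x) * (s - σ i)⁻¹ * (s - σ j)⁻¹))
      + B ℓ ℓ * ((s - x) * (s - σp)⁻¹ * (s - σ i0)⁻¹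
          - (s - x) * (s - σm)⁻¹ * (s - σ i0)⁻¹
          - (s - x) * (s - σp)⁻¹ * (s - σ i1)⁻¹
          + (s - x) * (s - σm)⁻¹ * (s - σ i1)⁻¹))
      (𝓝[(Set.range σ ∪ {σp, σm})ᶜ] x)
      (𝓝 ((∑ j, 2 * B ℓ (k j) * (dlt x σp (σ j) - dlt x σm (σ j)))
        + (∑ i, ∑ j ∈ univ.filter (· ≠ i), B (k i) (k j) * dlt x (σ i) (σ j))
        + B ℓ ℓ * (dlt x σp (σ i0) - dlt x σm (σ i0)
            - dlt x σp (σ i1) + dlt x σm (σ i1)))) := by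
    refine Tendsto.add (Tendsto.add ?_ ?_) ?_
    · refine tendsto_finset_sum _ fun j _ => ?_
      exact ((tendT σ σp σm σp (σ j) hx (hp j).symm).sub
        (tendT σ σp σm σm (σ j) hx (hm j).symm)).const_mul _
    · refine tendsto_finset_sum _ fun i _ => ?_
      refine tendsto_finset_sum _ fun j hj => ?_
      have hij : σ i ≠ σ j := fun h => (Finset.mem_filter.1 hj).2 (hinj h).symm
      exact (tendT σ σp σm (σ i) (σ j) hx hij).const_mul _
    · exact ((((tendT σ σp σm σp (σ i0) hx (hp i0).symm).sub
        (tendT σ σp σm σm (σ i0) hx (hm i0).symm)).sub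
        (tendT σ σp σm σp (σ i1) hx (hp i1).symm)).add
        (tendT σ σp σm σm (σ i1) hx (hm i1).symm)).const_mul _
  refine hT.congr' ?_
  filter_upwards [eventually_mem_nhdsWithin] with s hs
  exact (hgs s hs).symm


lemma sum_defCoeff_node {V : Type*} [AddCommGroup V] [Module ℂ V]
    (B : LinearMap.BilinForm ℂ V)
    {n : ℕ} (hn : 2 ≤ n) (k : Fin n → V) (ℓ : V) (σ : Fin n → ℂ) (σp : ℂ) :
    (∑ j, defCoeff B k ℓ j / (σp - σ j)) =
      (∑ j, 2 * B ℓ (k j) * (σp - σ j)⁻¹)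
        + B ℓ ℓ * ((σp - σ (⟨0, lt_of_lt_of_le two_pos hn⟩ : Fin n))⁻¹
            - (σp - σ (⟨n - 1, Nat.sub_lt (lt_of_lt_of_le two_pos hn) one_pos⟩ : Fin n))⁻¹) := by
  have hsplit : ∀ j : Fin n, defCoeff B k ℓ j / (σp - σ j)
      = 2 * B ℓ (k j) * (σp - σ j)⁻¹
        + (if j = (⟨0, lt_of_lt_of_le two_pos hn⟩ : Fin n) then B ℓ ℓ * (σp - σ j)⁻¹ else 0)
        - (if j = (⟨n - 1, Nat.sub_lt (lt_of_lt_of_le two_pos hn) one_pos⟩ : Fin n) then B ℓ ℓ * (σp - σ j)⁻¹ else 0) := by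
    intro j
    rw [defCoeff, sub_div, add_div]
    have h0 : (if (j : ℕ) = 0 then B ℓ ℓ else 0) / (σp - σ j)
        = (if j = (⟨0, lt_of_lt_of_le two_pos hn⟩ : Fin n) then B ℓ ℓ * (σp - σ j)⁻¹ else 0) := by
      by_cases hj : (j : ℕ) = 0
      · simp [hj, Fin.ext_iff, div_eq_mul_inv]
      · simp [hj, Fin.ext_iff]
    have h1 : (if (j : ℕ) = n - 1 then B ℓ ℓ else 0) / (σp - σ j)
        = (if j = (⟨n - 1, Nat.sub_lt (lt_of_lt_of_le two_pos hn) one_pos⟩ : Fin n) then B ℓ ℓ * (σp - σ j)⁻¹ else 0) := by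
      by_cases hj : (j : ℕ) = n - 1
      · simp [hj, Fin.ext_iff, div_eq_mul_inv]
      · simp [hj, Fin.ext_iff]
    rw [h0, h1, div_eq_mul_inv]
  rw [Finset.sum_congr rfl (fun j _ => hsplit j), Finset.sum_sub_distrib,
    Finset.sum_add_distrib, Finset.sum_ite_eq' univ, Finset.sum_ite_eq' univ]
  simp only [Finset.mem_univ, if_true]
  ring

lemma sum_dlt_ext {V : Type*} [AddCommGroup V] [Module ℂ V]
    (B : LinearMap.BilinForm ℂ V) (hsymm : ∀ u v : V, B u v = B v u)
    {n : ℕ} (k : Fin n → V) (σ : Fin n → ℂ) (hinj : Function.Injective σ) (i : Fin n) :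
    (∑ i', ∑ j ∈ univ.filter (· ≠ i'), B (k i') (k j) * dlt (σ i) (σ i') (σ j))
      = ∑ j ∈ univ.filter (· ≠ i), 2 * B (k i) (k j) * (σ i - σ j)⁻¹ := by
  have hterm : ∀ i' j : Fin n, j ≠ i' →
      B (k i') (k j) * dlt (σ i) (σ i') (σ j)
      = (if i' = i then B (k i) (k j) * (σ i - σ j)⁻¹
         else if j = i then B (k i') (k i) * (σ i - σ i')⁻¹ else 0) := by
    intro i' j hji
    rw [dlt]
    have c1 : σ i = σ i' ↔ i' = i := by rw [hinj.eq_iff]; exact eq_comm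
    have c2 : σ i = σ j ↔ j = i := by rw [hinj.eq_iff]; exact eq_comm
    by_cases h1 : i' = i
    · rw [if_pos (c1.2 h1), if_pos h1, h1]
    · rw [if_neg (fun h => h1 (c1.1 h)), if_neg h1]
      by_cases h2 : j = i
      · rw [if_pos (c2.2 h2), if_pos h2, h2]
      · rw [if_neg (fun h => h2 (c2.1 h)), if_neg h2, mul_zero]
  rw [Finset.sum_congr rfl (fun i' _ => Finset.sum_congr rfl
    (fun j hj => hterm i' j (Finset.mem_filter.1 hj).2))]
  rw [← Finset.add_sum_erase univ _ (Finset.mem_univ i)]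
  have houter1 : (∑ j ∈ univ.filter (· ≠ i),
      (if i = i then B (k i) (k j) * (σ i - σ j)⁻¹
       else if j = i then B (k i) (k i) * (σ i - σ i)⁻¹ else 0))
      = ∑ j ∈ univ.filter (· ≠ i), B (k i) (k j) * (σ i - σ j)⁻¹ :=
    Finset.sum_congr rfl fun j _ => if_pos rfl
  have houter2 : ∀ i' ∈ univ.erase i,
      (∑ j ∈ univ.filter (· ≠ i'),
        (if i' = i then B (k i) (k j) * (σ i - σ j)⁻¹
         else if j = i then B (k i') (k i) * (σ i - σ i')⁻¹ else 0))
      = B (k i') (k i) * (σ i - σ i')⁻¹ := by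
    intro i' hi'
    have hi'i : i' ≠ i := (Finset.mem_erase.1 hi').1
    rw [Finset.sum_eq_single_of_mem i
      (Finset.mem_filter.2 ⟨Finset.mem_univ i, fun h => hi'i h.symm⟩)]
    · rw [if_neg hi'i, if_pos rfl]
    · intro j _ hji
      rw [if_neg hi'i, if_neg hji]
  rw [houter1, Finset.sum_congr rfl houter2]
  have h2 : (∑ i' ∈ univ.erase i, B (k i') (k i) * (σ i - σ i')⁻¹)
      = ∑ j ∈ univ.filter (· ≠ i), B (k i) (k j) * (σ i - σ j)⁻¹ := by
    rw [Finset.filter_ne']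
    exact Finset.sum_congr rfl fun j _ => by rw [hsymm (k j) (k i)]
  rw [h2, ← Finset.sum_add_distrib]
  exact Finset.sum_congr rfl fun j _ => by ring

/-- If all external momenta are null, the ℓ²-deformed one-loop scattering equations are the
residues of the quadratic form `F` at the marked points: for every marked point `a`, the limit
of `(σ − σ_a)·F(σ)` as `σ → σ_a` through values distinct from all marked points exists and
equals `E_a`. -/
theorem ell2_deformed_scattering_equations_are_residues_of_quadratic_form
    {V : Type*} [AddCommGroup V] [Module ℂ V]
    (B : LinearMap.BilinForm ℂ V) (hsymm : ∀ u v : V, B u v = B v u)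
    {n : ℕ} (hn : 2 ≤ n) (k : Fin n → V) (ℓ : V) (σ : Fin n → ℂ) (σp σm : ℂ)
    (hinj : Function.Injective σ)
    (hp : ∀ i, σ i ≠ σp) (hm : ∀ i, σ i ≠ σm) (hpm : σp ≠ σm)
    (hnull : ∀ i, B (k i) (k i) = 0) :
    (∀ i : Fin n,
      Tendsto
        (fun s : ℂ => (s - σ i) *
          quadForm B k ℓ σ σp σm (σ ⟨0, by omega⟩) (σ ⟨n - 1, by omega⟩) s)
        (𝓝[(Set.range σ ∪ {σp, σm})ᶜ] (σ i))
        (𝓝 (scatEqExt B k ℓ σ σp σm i)))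
    ∧ Tendsto
        (fun s : ℂ => (s - σp) *
          quadForm B k ℓ σ σp σm (σ ⟨0, by omega⟩) (σ ⟨n - 1, by omega⟩) s)
        (𝓝[(Set.range σ ∪ {σp, σm})ᶜ] σp)
        (𝓝 (scatEqPlus B k ℓ σ σp))
    ∧ Tendsto
        (fun s : ℂ => (s - σm) *
          quadForm B k ℓ σ σp σm (σ ⟨0, by omega⟩) (σ ⟨n - 1, by omega⟩) s)
        (𝓝[(Set.range σ ∪ {σp, σm})ᶜ] σm)
        (𝓝 (scatEqMinus B k ℓ σ σm)) := by
  have h01 : (⟨0, by omega⟩ : Fin n) ≠ (⟨n - 1, by omega⟩ : Fin n) := by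
    simp only [ne_eq, Fin.mk.injEq]
    omega
  refine ⟨fun i => ?_, ?_, ?_⟩
  · -- external point σ i
    have hx : σ i ∈ Set.range σ ∪ {σp, σm} := Or.inl ⟨i, rfl⟩
    have h := master B hsymm k ℓ σ σp σm hinj hp hm hpm hnull
      ⟨0, by omega⟩ ⟨n - 1, by omega⟩ (σ i) hx
    have dP : ∀ j : Fin n, dlt (σ i) σp (σ j) = if i = j then (σ i - σp)⁻¹ else 0 := by
      intro j
      rw [dlt, if_neg (hp i)]
      by_cases hj : i = j
      · rw [if_pos (congrArg σ hj), if_pos hj]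
      · rw [if_neg (fun h => hj (hinj h)), if_neg hj]
    have dM : ∀ j : Fin n, dlt (σ i) σm (σ j) = if i = j then (σ i - σm)⁻¹ else 0 := by
      intro j
      rw [dlt, if_neg (hm i)]
      by_cases hj : i = j
      · rw [if_pos (congrArg σ hj), if_pos hj]
      · rw [if_neg (fun h => hj (hinj h)), if_neg hj]
    have heq : scatEqExt B k ℓ σ σp σm i
        = (∑ j, 2 * B ℓ (k j) * (dlt (σ i) σp (σ j) - dlt (σ i) σm (σ j)))
          + (∑ i', ∑ j ∈ univ.filter (· ≠ i'), B (k i') (k j) * dlt (σ i) (σ i') (σ j))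
          + B ℓ ℓ * (dlt (σ i) σp (σ (⟨0, by omega⟩ : Fin n))
              - dlt (σ i) σm (σ (⟨0, by omega⟩ : Fin n))
              - dlt (σ i) σp (σ (⟨n - 1, by omega⟩ : Fin n))
              + dlt (σ i) σm (σ (⟨n - 1, by omega⟩ : Fin n))) := by
      simp only [dP, dM]
      rw [sum_dlt_ext B hsymm k σ hinj i]
      have e1 : ∀ j : Fin n,
          2 * B ℓ (k j) * ((if i = j then (σ i - σp)⁻¹ else 0)
            - (if i = j then (σ i - σm)⁻¹ else 0))
          = if i = j then 2 * B ℓ (k j) * ((σ i - σp)⁻¹ - (σ i - σm)⁻¹) else 0 := by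
        intro j
        by_cases hj : i = j <;> simp [hj]
      rw [Finset.sum_congr rfl (fun j _ => e1 j), Finset.sum_ite_eq univ i]
      simp only [Finset.mem_univ, if_true]
      rw [scatEqExt]
      have eL : (∑ j ∈ univ.filter (· ≠ i), 2 * B (k i) (k j) / (σ i - σ j))
          = ∑ j ∈ univ.filter (· ≠ i), 2 * B (k i) (k j) * (σ i - σ j)⁻¹ :=
        Finset.sum_congr rfl fun j _ => div_eq_mul_inv _ _
      rw [eL]
      have hDfrac : defCoeff B k ℓ i * (σp - σm) / ((σ i - σp) * (σ i - σm))
          = defCoeff B k ℓ i * ((σ i - σp)⁻¹ - (σ i - σm)⁻¹) := by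
        have hip : σ i - σp ≠ 0 := sub_ne_zero.2 (hp i)
        have him : σ i - σm ≠ 0 := sub_ne_zero.2 (hm i)
        field_simp
        ring
      rw [hDfrac, defCoeff]
      have hsum2 : (∑ j ∈ univ.filter (· ≠ i), 2 * B (k i) (k j) * (σ i - σ j)⁻¹)
          = ∑ j ∈ univ.filter (· ≠ i), B (k i) (k j) * (σ i - σ j)⁻¹ * 2 :=
        Finset.sum_congr rfl fun j _ => by ring
      by_cases h0 : (i : ℕ) = 0 <;> by_cases h1 : (i : ℕ) = n - 1
      · omega
      all_goals {
        have hne1 : ¬ (0 : ℕ) = n - 1 := by omega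
        have hne2 : ¬ (n - 1 : ℕ) = 0 := by omega
        simp only [h0, h1, if_true, if_false, Fin.ext_iff, hne1, hne2]
        ring_nf
      }
    rw [heq]
    exact h
  · -- node point σp
    have hx : σp ∈ Set.range σ ∪ {σp, σm} := Or.inr (Set.mem_insert _ _)
    have h := master B hsymm k ℓ σ σp σm hinj hp hm hpm hnull
      ⟨0, by omega⟩ ⟨n - 1, by omega⟩ σp hx
    have heq : scatEqPlus B k ℓ σ σp
        = (∑ j, 2 * B ℓ (k j) * (dlt σp σp (σ j) - dlt σp σm (σ j)))
          + (∑ i', ∑ j ∈ univ.filter (· ≠ i'), B (k i') (k j) * dlt σp (σ i') (σ j))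
          + B ℓ ℓ * (dlt σp σp (σ (⟨0, by omega⟩ : Fin n))
              - dlt σp σm (σ (⟨0, by omega⟩ : Fin n))
              - dlt σp σp (σ (⟨n - 1, by omega⟩ : Fin n))
              + dlt σp σm (σ (⟨n - 1, by omega⟩ : Fin n))) := by
      have d1 : ∀ c : ℂ, dlt σp σp c = (σp - c)⁻¹ := fun c => if_pos rfl
      have d2 : ∀ j : Fin n, dlt σp σm (σ j) = 0 := fun j => by
        rw [dlt, if_neg hpm, if_neg (Ne.symm (hp j))]
      have d3 : ∀ i' j : Fin n, dlt σp (σ i') (σ j) = 0 := fun i' j => by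
        rw [dlt, if_neg (Ne.symm (hp i')), if_neg (Ne.symm (hp j))]
      simp only [d1, d2, d3, sub_zero, add_zero, mul_zero, Finset.sum_const_zero]
      rw [scatEqPlus, sum_defCoeff_node B hn k ℓ σ σp]
    rw [heq]
    exact h
  · -- node point σm
    have hx : σm ∈ Set.range σ ∪ {σp, σm} := Or.inr (Set.mem_insert_of_mem _ rfl)
    have h := master B hsymm k ℓ σ σp σm hinj hp hm hpm hnull
      ⟨0, by omega⟩ ⟨n - 1, by omega⟩ σm hx
    have heq : scatEqMinus B k ℓ σ σm
        = (∑ j, 2 * B ℓ (k j) * (dlt σm σp (σ j) - dlt σm σm (σ j)))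
          + (∑ i', ∑ j ∈ univ.filter (· ≠ i'), B (k i') (k j) * dlt σm (σ i') (σ j))
          + B ℓ ℓ * (dlt σm σp (σ (⟨0, by omega⟩ : Fin n))
              - dlt σm σm (σ (⟨0, by omega⟩ : Fin n))
              - dlt σm σp (σ (⟨n - 1, by omega⟩ : Fin n))
              + dlt σm σm (σ (⟨n - 1, by omega⟩ : Fin n))) := by
      have d1 : ∀ c : ℂ, dlt σm σm c = (σm - c)⁻¹ := fun c => if_pos rfl
      have d2 : ∀ j : Fin n, dlt σm σp (σ j) = 0 := fun j => by
        rw [dlt, if_neg (Ne.symm hpm), if_neg (Ne.symm (hm j))]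
      have d3 : ∀ i' j : Fin n, dlt σm (σ i') (σ j) = 0 := fun i' j => by
        rw [dlt, if_neg (Ne.symm (hm i')), if_neg (Ne.symm (hm j))]
      simp only [d1, d2, d3, zero_sub, add_zero, mul_zero, Finset.sum_const_zero]
      rw [scatEqMinus, sum_defCoeff_node B hn k ℓ σ σm]
      have e1 : (∑ j, 2 * B ℓ (k j) * -(σm - σ j)⁻¹)
          = -∑ j, 2 * B ℓ (k j) * (σm - σ j)⁻¹ := by
        rw [← Finset.sum_neg_distrib]
        exact Finset.sum_congr rfl fun j _ => by ring
      rw [e1]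
      ring
    rw [heq]
    exact h
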